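/- Let τ > 0 and let d, m ≥ 1 be integers. Let g : [0,τ] × ℝ^d → ℝ^m be bounded and measurable, with x ↦ g(t,x) continuous for each t, and let u : [0,τ] × ℝ^d → ℝ^m satisfy u(s,x) = u(0,x) + ∫_0^s g(t,x) dt for every (s,x) ∈ [0,τ] × ℝ^d. Assume moreover that for each t ∈ [0,τ] the map x ↦ u(t,x) is differentiable and its Jacobian ∇_x u is continuous on [0,τ] × ℝ^d. Then for every absolutely continuous curve ξ : [0,τ] → ℝ^d and every s ∈ [0,τ], u(s, ξ(s)) = u(0, ξ(0)) + ∫_0^s g(t, ξ(t)) dt + ∫_0^s ∇_x u(t, ξ(t)) ξ'(t) dt. -/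

import Mathlib

open MeasureTheory intervalIntegral

private lemma bddIntegrableOn {F : Type*} [NormedAddCommGroup F] {f : ℝ → F} {s : Set ℝ}
    (hs : MeasurableSet s) (hvol : volume s < ⊤)
    (hm : AEStronglyMeasurable f (volume.restrict s)) {B : ℝ}
    (hb : ∀ r ∈ s, ‖f r‖ ≤ B) : IntegrableOn f s :=
  Integrable.mono' (integrableOn_const (C := B) hvol.ne) hm
    ((ae_restrict_iff' hs).2 (Filter.Eventually.of_forall hb))

set_option maxHeartbeats 1000000 in
/-- **Deterministic Itô (chain rule) formula.**
Let `u(s,x) = u(0,x) + ∫_0^s g(t,x) dt` with `g` bounded, measurable and continuous in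
`x`, and suppose `x ↦ u(t,x)` is differentiable with Jacobian `Du` continuous on
`[0,τ] × ℝ^d`. Then along every absolutely continuous curve `ξ` (written as
`ξ(s) = ξ(0) + ∫_0^s ξ'`, with `ξ'` integrable),
`u(s,ξ(s)) = u(0,ξ(0)) + ∫_0^s g(t,ξ(t)) dt + ∫_0^s Du(t,ξ(t)) ξ'(t) dt`. -/
theorem statement16 (τ : ℝ) (hτ : 0 < τ) (d m : ℕ) (hd : 1 ≤ d) (hm : 1 ≤ m)
    (g u : ℝ → EuclideanSpace ℝ (Fin d) → EuclideanSpace ℝ (Fin m))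
    (Du : ℝ → EuclideanSpace ℝ (Fin d) →
      (EuclideanSpace ℝ (Fin d) →L[ℝ] EuclideanSpace ℝ (Fin m)))
    (hgmeas : Measurable (Function.uncurry g))
    (hgbdd : ∃ B : ℝ, ∀ t ∈ Set.Icc (0 : ℝ) τ, ∀ x, ‖g t x‖ ≤ B)
    (hgcont : ∀ t ∈ Set.Icc (0 : ℝ) τ, Continuous (g t))
    (hu : ∀ s ∈ Set.Icc (0 : ℝ) τ, ∀ x, u s x = u 0 x + ∫ t in (0 : ℝ)..s, g t x)
    (hDu : ∀ t ∈ Set.Icc (0 : ℝ) τ, ∀ x, HasFDerivAt (u t) (Du t x) x)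
    (hDucont : ContinuousOn (fun p : ℝ × EuclideanSpace ℝ (Fin d) => Du p.1 p.2)
      (Set.Icc 0 τ ×ˢ Set.univ))
    (ξ ξ' : ℝ → EuclideanSpace ℝ (Fin d))
    (hξ'int : IntegrableOn ξ' (Set.Icc 0 τ))
    (hξ : ∀ s ∈ Set.Icc (0 : ℝ) τ, ξ s = ξ 0 + ∫ t in (0 : ℝ)..s, ξ' t) :
    ∀ s ∈ Set.Icc (0 : ℝ) τ,
      u s (ξ s) = u 0 (ξ 0) + (∫ t in (0 : ℝ)..s, g t (ξ t))
        + ∫ t in (0 : ℝ)..s, Du t (ξ t) (ξ' t) := by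
  obtain ⟨B, hB⟩ := hgbdd
  intro s hs
  rcases eq_or_lt_of_le hs.1 with hs0 | hs0
  · subst hs0
    simp
  have hsτ : s ≤ τ := hs.2
  -- the partition points
  set tp : ℕ → ℕ → ℝ := fun n i => i * s / n with htp
  have hn0 : ∀ {n : ℕ}, 0 < n → (0 : ℝ) < n := fun h => Nat.cast_pos.2 h
  have htp0 : ∀ n, tp n 0 = 0 := by intro n; simp [htp]
  have htpn : ∀ n, 0 < n → tp n n = s := by
    intro n hn
    have hne : (n : ℝ) ≠ 0 := (hn0 hn).ne'
    simp only [htp]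
    exact mul_div_cancel_left₀ s hne
  have htpstep : ∀ n i, 0 < n → tp n (i + 1) = tp n i + s / n := by
    intro n i hn
    have hne : (n : ℝ) ≠ 0 := (hn0 hn).ne'
    simp only [htp]
    push_cast
    field_simp
  have htpmono : ∀ n i j, i ≤ j → tp n i ≤ tp n j := by
    intro n i j hij
    rcases Nat.eq_zero_or_pos n with rfl | hn
    · simp [htp]
    · have h1 : (i : ℝ) ≤ j := Nat.cast_le.2 hij
      have h2 : (0 : ℝ) < n := hn0 hn
      have h3 : (0 : ℝ) ≤ s := hs.1
      simp only [htp]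
      gcongr
  have htpmem : ∀ n i, i ≤ n → tp n i ∈ Set.Icc (0 : ℝ) τ := by
    intro n i hin
    rcases Nat.eq_zero_or_pos n with rfl | hn
    · have : i = 0 := Nat.le_zero.1 hin
      subst this
      simp [htp, hτ.le]
    · constructor
      · have h2 : (0 : ℝ) < n := hn0 hn
        have h3 : (0 : ℝ) ≤ s := hs.1
        simp only [htp]
        positivity
      · have := htpmono n i n hin
        rw [htpn n hn] at this
        exact this.trans hsτ
  -- subsets
  have hIsub : ∀ a b : ℝ, a ∈ Set.Icc (0:ℝ) τ → b ∈ Set.Icc (0:ℝ) τ →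
      Set.uIoc a b ⊆ Set.Icc (0:ℝ) τ := by
    intro a b ha hb r hr
    have hr' : r ∈ Set.Ioc (min a b) (max a b) := hr
    exact ⟨(le_min ha.1 hb.1).trans hr'.1.le, hr'.2.trans (max_le ha.2 hb.2)⟩
  -- interval integrability of ξ'
  have hξInt : ∀ a b : ℝ, a ∈ Set.Icc (0:ℝ) τ → b ∈ Set.Icc (0:ℝ) τ →
      IntervalIntegrable ξ' volume a b := by
    intro a b ha hb
    rw [intervalIntegrable_iff]
    exact hξ'int.mono_set (hIsub a b ha hb)
  -- continuity of ξ on [0,τ]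
  have hξcont : ContinuousOn ξ (Set.Icc 0 τ) := by
    have hint : IntegrableOn ξ' (Set.uIcc 0 τ) volume := by rwa [Set.uIcc_of_le hτ.le]
    have h1 : ContinuousOn (fun r => ξ 0 + ∫ t in (0:ℝ)..r, ξ' t) (Set.Icc 0 τ) := by
      have := intervalIntegral.continuousOn_primitive_interval (a := 0) (b := τ)
        (μ := volume) (f := ξ') hint
      rw [Set.uIcc_of_le hτ.le] at this
      exact continuousOn_const.add this
    exact h1.congr (fun r hr => hξ r hr)
  -- compactness bounds
  have hK : IsCompact (ξ '' Set.Icc 0 τ) := isCompact_Icc.image_of_continuousOn hξcont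
  obtain ⟨R0, hR0⟩ := hK.isBounded.subset_closedBall 0
  set R := max R0 0 with hRdef
  have hKR : ∀ a ∈ Set.Icc (0:ℝ) τ, ξ a ∈ Metric.closedBall (0 : EuclideanSpace ℝ (Fin d)) R :=
    fun a ha => Metric.closedBall_subset_closedBall (le_max_left _ _) (hR0 ⟨a, ha, rfl⟩)
  obtain ⟨C0, hC0⟩ := (isCompact_Icc.prod
      (isCompact_closedBall (0 : EuclideanSpace ℝ (Fin d)) R)).exists_bound_of_continuousOn
      (hDucont.mono (fun p hp => ⟨hp.1, trivial⟩))
  set C := max C0 0 with hCdef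
  have hCpos : (0:ℝ) ≤ C := le_max_right _ _
  have hC : ∀ a ∈ Set.Icc (0:ℝ) τ, ∀ y ∈ Metric.closedBall (0 : EuclideanSpace ℝ (Fin d)) R,
      ‖Du a y‖ ≤ C := fun a ha y hy => (hC0 (a, y) ⟨ha, hy⟩).trans (le_max_left _ _)
  -- the step objects
  set L : ℕ → ℕ → (EuclideanSpace ℝ (Fin d) →L[ℝ] EuclideanSpace ℝ (Fin m)) :=
    fun n i => ∫ θ in (0:ℝ)..1, Du (tp n i) (ξ (tp n i) + θ • (ξ (tp n (i+1)) - ξ (tp n i)))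
    with hL
  set Φ : ℕ → ℝ → (EuclideanSpace ℝ (Fin d) →L[ℝ] EuclideanSpace ℝ (Fin m)) :=
    fun n r => ∑ i ∈ Finset.range n,
      Set.indicator (Set.Ico (tp n i) (tp n (i+1))) (fun _ => L n i) r with hΦ
  set Y : ℕ → ℝ → EuclideanSpace ℝ (Fin d) :=
    fun n r => ∑ i ∈ Finset.range n,
      Set.indicator (Set.Ico (tp n i) (tp n (i+1))) (fun _ => ξ (tp n (i+1))) r with hY
  -- continuity helper for Du
  have hDuC : ∀ a ∈ Set.Icc (0:ℝ) τ, ∀ w : ℝ → EuclideanSpace ℝ (Fin d), Continuous w →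
      Continuous fun θ => Du a (w θ) := by
    intro a ha w hw
    rw [← continuousOn_univ]
    exact hDucont.comp ((continuous_const.prodMk hw).continuousOn) (fun θ _ => ⟨ha, trivial⟩)
  -- norm of L
  have hLnorm : ∀ n i, i + 1 ≤ n → ‖L n i‖ ≤ C := by
    intro n i hin
    have hti : tp n i ∈ Set.Icc (0:ℝ) τ := htpmem _ _ ((Nat.le_succ _).trans hin)
    have hti1 : tp n (i+1) ∈ Set.Icc (0:ℝ) τ := htpmem _ _ hin
    have h := intervalIntegral.norm_integral_le_of_norm_le_const (C := C) (a := (0:ℝ)) (b := 1)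
      (f := fun θ => Du (tp n i) (ξ (tp n i) + θ • (ξ (tp n (i+1)) - ξ (tp n i)))) ?_
    · simpa using h
    · intro θ hθ
      rw [Set.uIoc_of_le zero_le_one] at hθ
      have hθ' : θ ∈ Set.Icc (0:ℝ) 1 := Set.Ioc_subset_Icc_self hθ
      exact hC _ hti _ ((convex_closedBall _ _).add_smul_sub_mem (hKR _ hti) (hKR _ hti1) hθ')
  -- evaluation of the step functions
  have hdisj : ∀ n (i j : ℕ) (r : ℝ), r ∈ Set.Ico (tp n i) (tp n (i+1)) →
      r ∈ Set.Ico (tp n j) (tp n (j+1)) → i = j := by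
    intro n i j r hi hj
    by_contra hne
    rcases Nat.lt_or_ge i j with h | h
    · exact absurd ((hi.2.trans_le (htpmono n (i+1) j h)).trans_le hj.1) (lt_irrefl r)
    · have h' : j < i := lt_of_le_of_ne h (Ne.symm hne)
      exact absurd ((hj.2.trans_le (htpmono n (j+1) i h')).trans_le hi.1) (lt_irrefl r)
  have hΦval : ∀ n i, i < n → ∀ r ∈ Set.Ico (tp n i) (tp n (i+1)), Φ n r = L n i := by
    intro n i hi r hr
    simp only [hΦ]
    rw [Finset.sum_eq_single_of_mem i (Finset.mem_range.2 hi)]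
    · exact Set.indicator_of_mem hr _
    · intro j hj hne
      exact Set.indicator_of_notMem (fun hrj => hne (hdisj n j i r hrj hr)) _
  have hYval : ∀ n i, i < n → ∀ r ∈ Set.Ico (tp n i) (tp n (i+1)), Y n r = ξ (tp n (i+1)) := by
    intro n i hi r hr
    simp only [hY]
    rw [Finset.sum_eq_single_of_mem i (Finset.mem_range.2 hi)]
    · exact Set.indicator_of_mem hr _
    · intro j hj hne
      exact Set.indicator_of_notMem (fun hrj => hne (hdisj n j i r hrj hr)) _
  have hΦnorm : ∀ n r, ‖Φ n r‖ ≤ C := by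
    intro n r
    by_cases h : ∃ i, i < n ∧ r ∈ Set.Ico (tp n i) (tp n (i+1))
    · obtain ⟨i, hi, hr⟩ := h
      rw [hΦval n i hi r hr]
      exact hLnorm n i hi
    · push_neg at h
      have : Φ n r = 0 := Finset.sum_eq_zero fun i hi =>
        Set.indicator_of_notMem (h i (Finset.mem_range.1 hi)) _
      rw [this]
      simpa using hCpos
  -- measurability
  have hΦsm : ∀ n, StronglyMeasurable (Φ n) := by
    intro n
    exact Finset.stronglyMeasurable_fun_sum _ fun i _ =>
      stronglyMeasurable_const.indicator measurableSet_Ico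
  have hYsm : ∀ n, StronglyMeasurable (Y n) := by
    intro n
    exact Finset.stronglyMeasurable_fun_sum _ fun i _ =>
      stronglyMeasurable_const.indicator measurableSet_Ico
  have hgint : ∀ (w : ℝ → EuclideanSpace ℝ (Fin d)), Measurable w → ∀ a b : ℝ,
      a ∈ Set.Icc (0:ℝ) τ → b ∈ Set.Icc (0:ℝ) τ →
      IntervalIntegrable (fun r => g r (w r)) volume a b := by
    intro w hw a b ha hb
    rw [intervalIntegrable_iff]
    refine bddIntegrableOn measurableSet_uIoc measure_Ioc_lt_top
      ((hgmeas.comp (measurable_id.prodMk hw)).aestronglyMeasurable.restrict) (B := B) ?_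
    intro r hr
    exact hB r (hIsub a b ha hb hr) _
  have hΦξ'meas : ∀ n (S : Set ℝ), S ⊆ Set.Icc (0:ℝ) τ →
      AEStronglyMeasurable (fun r => (Φ n r) (ξ' r)) (volume.restrict S) := by
    intro n S hS
    exact isBoundedBilinearMap_apply.continuous.comp_aestronglyMeasurable
      (((hΦsm n).aestronglyMeasurable).prodMk
        ((hξ'int.1).mono_measure (Measure.restrict_mono hS le_rfl)))
  have hΦξ'int : ∀ n (a b : ℝ), a ∈ Set.Icc (0:ℝ) τ → b ∈ Set.Icc (0:ℝ) τ →
      IntervalIntegrable (fun r => (Φ n r) (ξ' r)) volume a b := by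
    intro n a b ha hb
    rw [intervalIntegrable_iff]
    have hCξ : IntegrableOn (fun r => C * ‖ξ' r‖) (Set.Icc 0 τ) volume :=
      hξ'int.norm.const_mul C
    refine Integrable.mono' (hCξ.mono_set (hIsub a b ha hb))
      (hΦξ'meas n _ (hIsub a b ha hb)) ?_
    refine (ae_restrict_iff' measurableSet_uIoc).2 (Filter.Eventually.of_forall fun r _ => ?_)
    exact le_trans ((Φ n r).le_opNorm _)
      (mul_le_mul_of_nonneg_right (hΦnorm n r) (norm_nonneg _))
  -- a.e. avoidance of single points
  have haeneq : ∀ c : ℝ, ∀ᵐ r : ℝ, r ≠ c := by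
    intro c
    refine ae_iff.2 ?_
    simp only [ne_eq, not_not, Set.setOf_eq_eq_singleton]
    exact Real.volume_singleton
  -- the per-piece identity
  have hpiece : ∀ n, 0 < n → ∀ i, i < n →
      u (tp n (i+1)) (ξ (tp n (i+1))) - u (tp n i) (ξ (tp n i)) =
        (∫ r in tp n i..tp n (i+1), g r (Y n r)) +
          ∫ r in tp n i..tp n (i+1), (Φ n r) (ξ' r) := by
    intro n hn i hi
    have hti : tp n i ∈ Set.Icc (0:ℝ) τ := htpmem n i hi.le
    have hti1 : tp n (i+1) ∈ Set.Icc (0:ℝ) τ := htpmem n (i+1) hi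
    have htle : tp n i ≤ tp n (i+1) := htpmono n i (i+1) (Nat.le_succ i)
    have h0mem : (0:ℝ) ∈ Set.Icc (0:ℝ) τ := ⟨le_rfl, hτ.le⟩
    -- A part
    have hA : u (tp n (i+1)) (ξ (tp n (i+1))) - u (tp n i) (ξ (tp n (i+1))) =
        ∫ r in tp n i..tp n (i+1), g r (Y n r) := by
      have e1 : u (tp n (i+1)) (ξ (tp n (i+1))) - u (tp n i) (ξ (tp n (i+1))) =
          ∫ r in tp n i..tp n (i+1), g r (ξ (tp n (i+1))) := by
        rw [hu _ hti1 _, hu _ hti _, add_sub_add_left_eq_sub]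
        exact intervalIntegral.integral_interval_sub_left
          (hgint (fun _ => ξ (tp n (i+1))) measurable_const 0 (tp n (i+1)) h0mem hti1)
          (hgint (fun _ => ξ (tp n (i+1))) measurable_const 0 (tp n i) h0mem hti)
      rw [e1]
      apply intervalIntegral.integral_congr_ae
      filter_upwards [haeneq (tp n (i+1))] with r hrne hrmem
      rw [Set.uIoc_of_le htle] at hrmem
      rw [hYval n i hi r ⟨hrmem.1.le, lt_of_le_of_ne hrmem.2 hrne⟩]
    -- B part
    have hvint : IntervalIntegrable ξ' volume (tp n i) (tp n (i+1)) := hξInt _ _ hti hti1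
    have hv : ξ (tp n (i+1)) - ξ (tp n i) = ∫ r in tp n i..tp n (i+1), ξ' r := by
      rw [hξ _ hti1, hξ _ hti, add_sub_add_left_eq_sub]
      exact intervalIntegral.integral_interval_sub_left
        (hξInt 0 (tp n (i+1)) h0mem hti1) (hξInt 0 (tp n i) h0mem hti)
    have hcontθ : Continuous fun θ : ℝ =>
        Du (tp n i) (ξ (tp n i) + θ • (ξ (tp n (i+1)) - ξ (tp n i))) :=
      hDuC _ hti _ (continuous_const.add (continuous_id.smul continuous_const))
    have hB2 : u (tp n i) (ξ (tp n (i+1))) - u (tp n i) (ξ (tp n i)) =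
        (L n i) (ξ (tp n (i+1)) - ξ (tp n i)) := by
      have hderiv : ∀ θ ∈ Set.uIcc (0:ℝ) 1,
          HasDerivAt (fun θ : ℝ => u (tp n i) (ξ (tp n i) + θ • (ξ (tp n (i+1)) - ξ (tp n i))))
            (Du (tp n i) (ξ (tp n i) + θ • (ξ (tp n (i+1)) - ξ (tp n i)))
              (ξ (tp n (i+1)) - ξ (tp n i))) θ := by
        intro θ _
        have h1 : HasDerivAt (fun θ : ℝ => ξ (tp n i) + θ • (ξ (tp n (i+1)) - ξ (tp n i)))
            (ξ (tp n (i+1)) - ξ (tp n i)) θ := by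
          simpa using ((hasDerivAt_id θ).smul_const (ξ (tp n (i+1)) - ξ (tp n i))).const_add
            (ξ (tp n i))
        exact (hDu (tp n i) hti _).comp_hasDerivAt θ h1
      have hintθ : IntervalIntegrable (fun θ : ℝ =>
          Du (tp n i) (ξ (tp n i) + θ • (ξ (tp n (i+1)) - ξ (tp n i)))
            (ξ (tp n (i+1)) - ξ (tp n i))) volume 0 1 :=
        (((ContinuousLinearMap.apply ℝ (EuclideanSpace ℝ (Fin m))
          (ξ (tp n (i+1)) - ξ (tp n i))).continuous.comp hcontθ)).intervalIntegrable 0 1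
      have hFTC := intervalIntegral.integral_eq_sub_of_hasDerivAt hderiv hintθ
      have e2 : ξ (tp n i) + (1:ℝ) • (ξ (tp n (i+1)) - ξ (tp n i)) = ξ (tp n (i+1)) := by
        rw [one_smul]; abel
      have e3 : ξ (tp n i) + (0:ℝ) • (ξ (tp n (i+1)) - ξ (tp n i)) = ξ (tp n i) := by
        rw [zero_smul, add_zero]
      rw [e2, e3] at hFTC
      have hLdef : L n i = ∫ θ in (0:ℝ)..1,
          Du (tp n i) (ξ (tp n i) + θ • (ξ (tp n (i+1)) - ξ (tp n i))) := rfl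
      rw [← hFTC, hLdef]
      rw [intervalIntegral.integral_of_le zero_le_one, intervalIntegral.integral_of_le zero_le_one]
      exact (ContinuousLinearMap.integral_apply (hcontθ.integrableOn_Ioc) _).symm
    have hB3 : (L n i) (ξ (tp n (i+1)) - ξ (tp n i)) =
        ∫ r in tp n i..tp n (i+1), (Φ n r) (ξ' r) := by
      rw [hv, ← ContinuousLinearMap.intervalIntegral_comp_comm (L n i) hvint]
      apply intervalIntegral.integral_congr_ae
      filter_upwards [haeneq (tp n (i+1))] with r hrne hrmem
      rw [Set.uIoc_of_le htle] at hrmem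
      rw [hΦval n i hi r ⟨hrmem.1.le, lt_of_le_of_ne hrmem.2 hrne⟩]
    calc u (tp n (i+1)) (ξ (tp n (i+1))) - u (tp n i) (ξ (tp n i))
        = (u (tp n (i+1)) (ξ (tp n (i+1))) - u (tp n i) (ξ (tp n (i+1)))) +
            (u (tp n i) (ξ (tp n (i+1))) - u (tp n i) (ξ (tp n i))) := by abel
      _ = (∫ r in tp n i..tp n (i+1), g r (Y n r)) +
            ∫ r in tp n i..tp n (i+1), (Φ n r) (ξ' r) := by rw [hA, hB2, hB3]
  -- the key identity
  have key : ∀ n, 0 < n → u s (ξ s) - u 0 (ξ 0) =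
      (∫ r in (0:ℝ)..s, g r (Y n r)) + ∫ r in (0:ℝ)..s, (Φ n r) (ξ' r) := by
    intro n hn
    have h1 : u s (ξ s) - u 0 (ξ 0) =
        ∑ i ∈ Finset.range n, (u (tp n (i+1)) (ξ (tp n (i+1))) - u (tp n i) (ξ (tp n i))) := by
      rw [Finset.sum_range_sub (fun i => u (tp n i) (ξ (tp n i)))]
      rw [htp0, htpn n hn]
    rw [h1, Finset.sum_congr rfl (fun i hi => hpiece n hn i (Finset.mem_range.1 hi)),
      Finset.sum_add_distrib]
    congr 1
    · have := intervalIntegral.sum_integral_adjacent_intervals (a := tp n) (n := n)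
        (f := fun r => g r (Y n r)) (μ := volume)
        (fun k hk => hgint (Y n) (hYsm n).measurable _ _ (htpmem n k hk.le) (htpmem n (k+1) hk))
      rw [htp0, htpn n hn] at this
      exact this
    · have := intervalIntegral.sum_integral_adjacent_intervals (a := tp n) (n := n)
        (f := fun r => (Φ n r) (ξ' r)) (μ := volume)
        (fun k hk => hΦξ'int n _ _ (htpmem n k hk.le) (htpmem n (k+1) hk))
      rw [htp0, htpn n hn] at this
      exact this
  -- floor facts
  have hfl : ∀ r ∈ Set.Ioo (0:ℝ) s, ∀ n : ℕ, 0 < n →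
      ⌊r * n / s⌋₊ < n ∧ r ∈ Set.Ico (tp n ⌊r * n / s⌋₊) (tp n (⌊r * n / s⌋₊ + 1)) := by
    intro r hr n hn
    have hnR : (0:ℝ) < n := hn0 hn
    have hy0 : (0:ℝ) ≤ r * n / s := div_nonneg (mul_nonneg hr.1.le (Nat.cast_nonneg n)) hs0.le
    have hlt : ⌊r * n / s⌋₊ < n := by
      rw [Nat.floor_lt hy0, div_lt_iff₀ hs0]
      calc r * n < s * n := mul_lt_mul_of_pos_right hr.2 hnR
        _ = n * s := mul_comm _ _
    refine ⟨hlt, ⟨?_, ?_⟩⟩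
    · simp only [htp]
      rw [div_le_iff₀ hnR]
      have h1 : (⌊r * n / s⌋₊ : ℝ) ≤ r * n / s := Nat.floor_le hy0
      calc (⌊r * n / s⌋₊ : ℝ) * s ≤ r * n / s * s := mul_le_mul_of_nonneg_right h1 hs0.le
        _ = r * n := div_mul_cancel₀ _ hs0.ne'
    · simp only [htp]
      rw [lt_div_iff₀ hnR]
      have h2 : r * n / s < ⌊r * n / s⌋₊ + 1 := Nat.lt_floor_add_one _
      have h3 : r * n < (⌊r * n / s⌋₊ + 1) * s := by
        rw [div_lt_iff₀ hs0] at h2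
        exact h2
      push_cast
      linarith
  -- memberships for the moving partition points
  have hmema : ∀ r ∈ Set.Ioo (0:ℝ) s, ∀ n : ℕ, tp n ⌊r * n / s⌋₊ ∈ Set.Icc (0:ℝ) τ := by
    intro r hr n
    rcases Nat.eq_zero_or_pos n with rfl | hn
    · simp [htp, hτ.le]
    · exact htpmem n _ (hfl r hr n hn).1.le
  have hmemb : ∀ r ∈ Set.Ioo (0:ℝ) s, ∀ n : ℕ, tp n (⌊r * n / s⌋₊ + 1) ∈ Set.Icc (0:ℝ) τ := by
    intro r hr n
    rcases Nat.eq_zero_or_pos n with rfl | hn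
    · simp [htp, hτ.le]
    · exact htpmem n _ (hfl r hr n hn).1
  -- convergence of partition points
  have htendA : ∀ r ∈ Set.Ioo (0:ℝ) s,
      Filter.Tendsto (fun n : ℕ => tp n ⌊r * n / s⌋₊) Filter.atTop (nhds r) ∧
      Filter.Tendsto (fun n : ℕ => tp n (⌊r * n / s⌋₊ + 1)) Filter.atTop (nhds r) := by
    intro r hr
    have hsn : Filter.Tendsto (fun n : ℕ => s / n) Filter.atTop (nhds 0) :=
      tendsto_const_div_atTop_nhds_zero_nat s
    have hbnd : ∀ᶠ n : ℕ in Filter.atTop,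
        r - s / n ≤ tp n ⌊r * n / s⌋₊ ∧ tp n ⌊r * n / s⌋₊ ≤ r ∧
        r ≤ tp n (⌊r * n / s⌋₊ + 1) ∧ tp n (⌊r * n / s⌋₊ + 1) ≤ r + s / n := by
      filter_upwards [Filter.eventually_ge_atTop 1] with n hn1
      have hn : 0 < n := hn1
      obtain ⟨hlt, hIco⟩ := hfl r hr n hn
      have hstep := htpstep n ⌊r * n / s⌋₊ hn
      refine ⟨by linarith [hIco.2], hIco.1, hIco.2.le, by linarith [hIco.1]⟩
    constructor
    · refine tendsto_of_tendsto_of_tendsto_of_le_of_le'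
        (g := fun n : ℕ => r - s / n) (h := fun _ : ℕ => r) ?_ tendsto_const_nhds ?_ ?_
      · simpa using tendsto_const_nhds.sub hsn
      · filter_upwards [hbnd] with n h using h.1
      · filter_upwards [hbnd] with n h using h.2.1
    · refine tendsto_of_tendsto_of_tendsto_of_le_of_le'
        (g := fun _ : ℕ => r) (h := fun n : ℕ => r + s / n) tendsto_const_nhds ?_ ?_ ?_
      · simpa using tendsto_const_nhds.add hsn
      · filter_upwards [hbnd] with n h using h.2.2.1
      · filter_upwards [hbnd] with n h using h.2.2.2
  -- convergence of ξ along sequences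
  have hξtend : ∀ r ∈ Set.Icc (0:ℝ) τ, ∀ w : ℕ → ℝ, (∀ n, w n ∈ Set.Icc (0:ℝ) τ) →
      Filter.Tendsto w Filter.atTop (nhds r) →
      Filter.Tendsto (fun n => ξ (w n)) Filter.atTop (nhds (ξ r)) := by
    intro r hr w hwmem hw
    exact (hξcont r hr).tendsto.comp
      (tendsto_nhdsWithin_iff.2 ⟨hw, Filter.Eventually.of_forall hwmem⟩)
  -- convergence of Φ
  have hΦtend : ∀ r ∈ Set.Ioo (0:ℝ) s,
      Filter.Tendsto (fun n => Φ n r) Filter.atTop (nhds (Du r (ξ r))) := by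
    intro r hrIoo
    have hrIcc : r ∈ Set.Icc (0:ℝ) τ := ⟨hrIoo.1.le, hrIoo.2.le.trans hsτ⟩
    have hwa := (htendA r hrIoo).1
    have hwb := (htendA r hrIoo).2
    have hξa : Filter.Tendsto (fun n => ξ (tp n ⌊r * n / s⌋₊)) Filter.atTop (nhds (ξ r)) :=
      hξtend r hrIcc _ (hmema r hrIoo) hwa
    have hξb : Filter.Tendsto (fun n => ξ (tp n (⌊r * n / s⌋₊ + 1))) Filter.atTop (nhds (ξ r)) :=
      hξtend r hrIcc _ (hmemb r hrIoo) hwb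
    have hLim : Filter.Tendsto (fun n => ∫ θ in (0:ℝ)..1,
        Du (tp n ⌊r * n / s⌋₊) (ξ (tp n ⌊r * n / s⌋₊) +
          θ • (ξ (tp n (⌊r * n / s⌋₊ + 1)) - ξ (tp n ⌊r * n / s⌋₊))))
        Filter.atTop (nhds (Du r (ξ r))) := by
      rw [show Du r (ξ r) = ∫ θ in (0:ℝ)..1, Du r (ξ r) by simp]
      apply intervalIntegral.tendsto_integral_filter_of_dominated_convergence
        (F := fun (n : ℕ) (θ : ℝ) => Du (tp n ⌊r * n / s⌋₊) (ξ (tp n ⌊r * n / s⌋₊) +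
          θ • (ξ (tp n (⌊r * n / s⌋₊ + 1)) - ξ (tp n ⌊r * n / s⌋₊))))
        (f := fun _ : ℝ => Du r (ξ r)) (μ := volume)
        (bound := fun _ => C)
      · refine Filter.Eventually.of_forall fun n => ?_
        exact ((hDuC _ (hmema r hrIoo n) _
          (continuous_const.add (continuous_id.smul continuous_const))).aestronglyMeasurable).restrict
      · refine Filter.Eventually.of_forall fun n => ae_of_all _ fun θ hθ => ?_
        rw [Set.uIoc_of_le zero_le_one] at hθ
        have hθ' : θ ∈ Set.Icc (0:ℝ) 1 := Set.Ioc_subset_Icc_self hθ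
        exact hC _ (hmema r hrIoo n) _
          ((convex_closedBall _ _).add_smul_sub_mem (hKR _ (hmema r hrIoo n))
            (hKR _ (hmemb r hrIoo n)) hθ')
      · exact intervalIntegrable_const
      · refine ae_of_all _ fun θ _ => ?_
        have hz : Filter.Tendsto (fun n => ξ (tp n ⌊r * n / s⌋₊) +
            θ • (ξ (tp n (⌊r * n / s⌋₊ + 1)) - ξ (tp n ⌊r * n / s⌋₊)))
            Filter.atTop (nhds (ξ r)) := by
          have := hξa.add ((tendsto_const_nhds (x := θ)).smul (hξb.sub hξa))
          simpa using this
        have hpair : Filter.Tendsto (fun n => (tp n ⌊r * n / s⌋₊,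
            ξ (tp n ⌊r * n / s⌋₊) + θ • (ξ (tp n (⌊r * n / s⌋₊ + 1)) - ξ (tp n ⌊r * n / s⌋₊))))
            Filter.atTop (nhdsWithin (r, ξ r) (Set.Icc (0:ℝ) τ ×ˢ Set.univ)) := by
          rw [tendsto_nhdsWithin_iff]
          exact ⟨hwa.prodMk_nhds hz,
            Filter.Eventually.of_forall fun n => ⟨hmema r hrIoo n, trivial⟩⟩
        exact ((hDucont (r, ξ r) ⟨hrIcc, trivial⟩).tendsto).comp hpair
    refine Filter.Tendsto.congr' ?_ hLim
    filter_upwards [Filter.eventually_ge_atTop 1] with n hn1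
    obtain ⟨hlt, hIco⟩ := hfl r hrIoo n hn1
    exact (hΦval n _ hlt r hIco).symm
  -- the two DCT limits
  have h0τ : (0:ℝ) ∈ Set.Icc (0:ℝ) τ := ⟨le_rfl, hτ.le⟩
  have hsIcc : s ∈ Set.Icc (0:ℝ) τ := hs
  have hG : Filter.Tendsto (fun n => ∫ r in (0:ℝ)..s, g r (Y n r)) Filter.atTop
      (nhds (∫ r in (0:ℝ)..s, g r (ξ r))) := by
    apply intervalIntegral.tendsto_integral_filter_of_dominated_convergence (bound := fun _ => B)
    · exact Filter.Eventually.of_forall fun n =>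
        ((hgmeas.comp (measurable_id.prodMk (hYsm n).measurable)).aestronglyMeasurable).restrict
    · refine Filter.Eventually.of_forall fun n => ae_of_all _ fun r hr => ?_
      exact hB r (hIsub 0 s h0τ hsIcc hr) _
    · exact intervalIntegrable_const
    · filter_upwards [haeneq s] with r hrne hrmem
      rw [Set.uIoc_of_le hs.1] at hrmem
      have hrIoo : r ∈ Set.Ioo (0:ℝ) s := ⟨hrmem.1, lt_of_le_of_ne hrmem.2 hrne⟩
      have hrIcc : r ∈ Set.Icc (0:ℝ) τ := ⟨hrIoo.1.le, hrIoo.2.le.trans hsτ⟩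
      have h2 : Filter.Tendsto (fun n => ξ (tp n (⌊r * n / s⌋₊ + 1))) Filter.atTop
          (nhds (ξ r)) := hξtend r hrIcc _ (hmemb r hrIoo) (htendA r hrIoo).2
      have h3 : Filter.Tendsto (fun n => g r (ξ (tp n (⌊r * n / s⌋₊ + 1)))) Filter.atTop
          (nhds (g r (ξ r))) := ((hgcont r hrIcc).tendsto _).comp h2
      refine Filter.Tendsto.congr' ?_ h3
      filter_upwards [Filter.eventually_ge_atTop 1] with n hn1
      obtain ⟨hlt, hIco⟩ := hfl r hrIoo n hn1
      exact congrArg (g r) (hYval n _ hlt r hIco).symm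
  have hH : Filter.Tendsto (fun n => ∫ r in (0:ℝ)..s, (Φ n r) (ξ' r)) Filter.atTop
      (nhds (∫ r in (0:ℝ)..s, Du r (ξ r) (ξ' r))) := by
    apply intervalIntegral.tendsto_integral_filter_of_dominated_convergence
      (bound := fun r => C * ‖ξ' r‖)
    · exact Filter.Eventually.of_forall fun n => hΦξ'meas n _ (hIsub 0 s h0τ hsIcc)
    · refine Filter.Eventually.of_forall fun n => ae_of_all _ fun r _ => ?_
      exact le_trans ((Φ n r).le_opNorm _)
        (mul_le_mul_of_nonneg_right (hΦnorm n r) (norm_nonneg _))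
    · rw [intervalIntegrable_iff]
      have hCξ : IntegrableOn (fun r => C * ‖ξ' r‖) (Set.Icc 0 τ) volume :=
        hξ'int.norm.const_mul C
      exact hCξ.mono_set (hIsub 0 s h0τ hsIcc)
    · filter_upwards [haeneq s] with r hrne hrmem
      rw [Set.uIoc_of_le hs.1] at hrmem
      have hrIoo : r ∈ Set.Ioo (0:ℝ) s := ⟨hrmem.1, lt_of_le_of_ne hrmem.2 hrne⟩
      exact ((ContinuousLinearMap.apply ℝ (EuclideanSpace ℝ (Fin m))
        (ξ' r)).continuous.tendsto _).comp (hΦtend r hrIoo)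
  -- conclusion
  have hconst : Filter.Tendsto (fun _ : ℕ => u s (ξ s) - u 0 (ξ 0)) Filter.atTop
      (nhds ((∫ r in (0:ℝ)..s, g r (ξ r)) + ∫ r in (0:ℝ)..s, Du r (ξ r) (ξ' r))) := by
    refine Filter.Tendsto.congr' ?_ (hG.add hH)
    filter_upwards [Filter.eventually_ge_atTop 1] with n hn1
    exact (key n hn1).symm
  have hfinal := tendsto_nhds_unique hconst tendsto_const_nhds
  rw [add_assoc]
  exact sub_eq_iff_eq_add'.1 hfinal.symm
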